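/- Let n ≥ 1 and let V be a unitary 2^n × 2^n complex matrix indexed by bit strings x : Fin n → Bool that commutes with the global bit-flip matrix X^{⊗n}. Then for every j : Fin n, ⟨V|+^n⟩, Z_j V|+^n⟩⟩ = 0. -/
import Mathlib


open Matrix

/-- The single-qubit Pauli-Z operator on qubit `j`: diagonal with entry `(-1)^{x_j}`. -/
noncomputable def Zop {n : ℕ} (j : Fin n) : Matrix (Fin n → Bool) (Fin n → Bool) ℂ :=
  Matrix.diagonal (fun x => if x j then -1 else 1)

/-- The global bit-flip operator `X^{⊗n}`: the permutation matrix of bitwise negation. -/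
noncomputable def XallF (n : ℕ) : Matrix (Fin n → Bool) (Fin n → Bool) ℂ :=
  Matrix.of (fun x y => if y = (fun i => ! x i) then 1 else 0)

/-- The state `|+^n⟩`: all entries equal to `2^{-n/2}`. -/
noncomputable def plusF (n : ℕ) : (Fin n → Bool) → ℂ :=
  fun _ => ((1 / Real.sqrt (2 ^ n) : ℝ) : ℂ)

lemma XallF_mulVec {n : ℕ} (v : (Fin n → Bool) → ℂ) :
    (XallF n).mulVec v = fun x => v (fun i => ! x i) := by
  funext x
  simp [XallF, Matrix.mulVec, dotProduct]

lemma neg_involutive' (n : ℕ) : Function.Involutive (fun (x : Fin n → Bool) i => ! x i) := by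
  intro x; funext i; simp

theorem stmt4 (n : ℕ) (hn : 1 ≤ n)
    (V : Matrix (Fin n → Bool) (Fin n → Bool) ℂ)
    (hV : Vᴴ * V = 1 ∧ V * Vᴴ = 1)
    (hsym : V * XallF n = XallF n * V)
    (j : Fin n) :
    star (V.mulVec (plusF n)) ⬝ᵥ (Zop j).mulVec (V.mulVec (plusF n)) = 0 := by
  set ψ := V.mulVec (plusF n) with hψ
  have hXplus : (XallF n).mulVec (plusF n) = plusF n := by
    rw [XallF_mulVec]; rfl
  have h1 : (XallF n).mulVec ψ = ψ := by
    rw [hψ, Matrix.mulVec_mulVec, ← hsym, ← Matrix.mulVec_mulVec, hXplus]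
  have hfix : ∀ x, ψ (fun i => ! x i) = ψ x := by
    intro x
    have := congrFun h1 x
    rwa [XallF_mulVec] at this
  set z : (Fin n → Bool) → ℂ := fun x => if x j then -1 else 1 with hz
  have hsum : star ψ ⬝ᵥ (Zop j).mulVec ψ = ∑ x, star (ψ x) * (z x * ψ x) := by
    simp [dotProduct, Zop, Matrix.mulVec_diagonal, hz]
  have hneg : star ψ ⬝ᵥ (Zop j).mulVec ψ = -(star ψ ⬝ᵥ (Zop j).mulVec ψ) := by
    rw [hsum]
    conv_lhs => rw [← Equiv.sum_comp ((neg_involutive' n).toPerm)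
      (fun x => star (ψ x) * (z x * ψ x))]
    rw [← Finset.sum_neg_distrib]
    simp only [Function.Involutive.coe_toPerm]
    apply Finset.sum_congr rfl
    intro x _
    have hzx : z (fun i => ! x i) = - z x := by
      simp only [hz]
      by_cases h : x j <;> simp [h]
    rw [hfix, hzx]
    ring
  linear_combination hneg / 2
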